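/- Let b₁, b₂ ∈ C[0,1] with b₂(r) ≥ b₁(r) > 0 for all r ∈ (0,1), and assume b₂(r) > b₁(r) on a subset of (0,1) of positive Lebesgue measure. For i = 1,2 let u_i ∈ C¹[0,1] be such that r ↦ (−u_i'(r))^N is continuously differentiable on (0,1), ((−u_i')^N)'(r) = b_i(r) (u_i(r))^N for all r ∈ (0,1), and u_i'(0) = u_i(1) = 0. If u₁(r) ≠ 0 for all r ∈ (0,1), then u₂ has at least one zero in (0,1). -/

import Mathlib

open Set Filter Topology MeasureTheory

private lemma amgm (N : ℕ) {x y : ℝ} (hx : 0 ≤ x) (hy : 0 ≤ y) :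
    ((N : ℝ) + 1) * (x * y ^ N) ≤ x ^ (N + 1) + N * y ^ (N + 1) := by
  induction N with
  | zero => simp
  | succ M ih =>
    have h1 : (0:ℝ) ≤ (x - y) * (x ^ (M + 1) - y ^ (M + 1)) := by
      rcases le_total x y with h | h
      · have := pow_le_pow_left₀ hx h (M + 1); nlinarith
      · have := pow_le_pow_left₀ hy h (M + 1); nlinarith
    have h2 := mul_le_mul_of_nonneg_left ih hy
    push_cast
    ring_nf at h1 h2 ⊢
    nlinarith [h1, h2]

private lemma sign_const {f : ℝ → ℝ} (hc : ContinuousOn f (Ioo 0 1))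
    (hne : ∀ r ∈ Ioo (0:ℝ) 1, f r ≠ 0) :
    (∀ r ∈ Ioo (0:ℝ) 1, 0 < f r) ∨ (∀ r ∈ Ioo (0:ℝ) 1, f r < 0) := by
  by_contra h
  push_neg at h
  obtain ⟨⟨a, ha, hfa⟩, ⟨b, hb, hfb⟩⟩ := h
  have hfa' : f a < 0 := lt_of_le_of_ne hfa (hne a ha)
  have hfb' : 0 < f b := lt_of_le_of_ne hfb (Ne.symm (hne b hb))
  rcases le_total a b with hab | hab
  · have hsub : Icc a b ⊆ Ioo (0:ℝ) 1 := Icc_subset_Ioo ha.1 hb.2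
    have := intermediate_value_Icc hab (hc.mono hsub)
      (mem_Icc.mpr ⟨le_of_lt hfa', le_of_lt hfb'⟩)
    obtain ⟨x, hx, hfx⟩ := this
    exact hne x (hsub hx) hfx
  · have hsub : Icc b a ⊆ Ioo (0:ℝ) 1 := Icc_subset_Ioo hb.1 ha.2
    have := intermediate_value_Icc' hab (hc.mono hsub)
      (mem_Icc.mpr ⟨le_of_lt hfa', le_of_lt hfb'⟩)
    obtain ⟨x, hx, hfx⟩ := this
    exact hne x (hsub hx) hfx


private lemma basic (N : ℕ) (hN : 1 ≤ N) (b u u' : ℝ → ℝ)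
    (hbpos : ∀ r ∈ Ioo (0:ℝ) 1, 0 < b r)
    (hu'c : ContinuousOn u' (Icc 0 1))
    (hud : ∀ r ∈ Icc (0:ℝ) 1, HasDerivWithinAt u (u' r) (Icc 0 1) r)
    (hueq : ∀ r ∈ Ioo (0:ℝ) 1,
      HasDerivAt (fun t => (-u' t) ^ N) (b r * (u r) ^ N) r)
    (hb0 : u' 0 = 0) (hb1 : u 1 = 0)
    (hpos : ∀ r ∈ Ioo (0:ℝ) 1, 0 < u r) :
    (∀ r ∈ Ioc (0:ℝ) 1, u' r < 0) ∧ (∀ r ∈ Ico (0:ℝ) 1, 0 < u r) := by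
  set v : ℝ → ℝ := fun t => (-u' t) ^ N with hv
  have huc : ContinuousOn u (Icc 0 1) := fun r hr => (hud r hr).continuousWithinAt
  have hvc : ContinuousOn v (Icc 0 1) := (hu'c.neg).pow N
  -- v is strictly monotone on [0,1]
  have hvmono : StrictMonoOn v (Icc 0 1) := by
    apply strictMonoOn_of_deriv_pos (convex_Icc 0 1) hvc
    intro x hx
    rw [interior_Icc] at hx
    rw [(hueq x hx).deriv]
    exact mul_pos (hbpos x hx) (pow_pos (hpos x hx) N)
  have hv0 : v 0 = 0 := by simp [hv, hb0, zero_pow (Nat.one_le_iff_ne_zero.mp hN)]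
  have hvpos : ∀ r ∈ Ioc (0:ℝ) 1, 0 < v r := by
    intro r hr
    have := hvmono (left_mem_Icc.mpr zero_le_one) ⟨hr.1.le, hr.2⟩ hr.1
    rwa [hv0] at this
  have hune : ∀ r ∈ Ioc (0:ℝ) 1, u' r ≠ 0 := by
    intro r hr h
    have := hvpos r hr
    rw [hv] at this
    simp only [h, neg_zero] at this
    rw [zero_pow (Nat.one_le_iff_ne_zero.mp hN)] at this
    exact lt_irrefl 0 this
  -- u' < 0 on Ioo
  have hu'neg : ∀ r ∈ Ioo (0:ℝ) 1, u' r < 0 := by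
    intro t ht
    rcases lt_or_gt_of_ne (hune t ⟨ht.1, ht.2.le⟩) with h | h
    · exact h
    · exfalso
      -- u' > 0 everywhere on Ioo by sign constancy
      have hsign : ∀ s ∈ Ioo (0:ℝ) 1, 0 < u' s := by
        rcases sign_const (hu'c.mono Ioo_subset_Icc_self) (fun s hs => hune s ⟨hs.1, hs.2.le⟩) with hp | hn
        · exact hp
        · exact absurd (hn t ht) (not_lt.mpr h.le)
      -- then u strictly increasing on [t,1]
      have hmono : StrictMonoOn u (Icc t 1) := by
        apply strictMonoOn_of_deriv_pos (convex_Icc t 1)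
          (huc.mono (Icc_subset_Icc ht.1.le le_rfl))
        intro x hx
        rw [interior_Icc] at hx
        have hx' : x ∈ Ioo (0:ℝ) 1 := ⟨lt_trans ht.1 hx.1, hx.2⟩
        have hd : HasDerivAt u (u' x) x :=
          (hud x ⟨hx'.1.le, hx'.2.le⟩).hasDerivAt
            (Icc_mem_nhds hx'.1 hx'.2)
        rw [hd.deriv]
        exact hsign x hx'
      have := hmono (left_mem_Icc.mpr ht.2.le) (right_mem_Icc.mpr ht.2.le) ht.2
      rw [hb1] at this
      exact absurd (hpos t ht) (not_lt.mpr this.le)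
  -- u' 1 < 0 by continuity
  have hu'1 : u' 1 < 0 := by
    rcases lt_or_gt_of_ne (hune 1 ⟨zero_lt_one, le_rfl⟩) with h | h
    · exact h
    · exfalso
      have hct : ContinuousWithinAt u' (Icc 0 1) 1 :=
        hu'c 1 (right_mem_Icc.mpr zero_le_one)
      have hct' : Tendsto u' (𝓝[Ioo 0 1] 1) (𝓝 (u' 1)) :=
        hct.tendsto.mono_left (nhdsWithin_mono _ Ioo_subset_Icc_self)
      have hnb : (𝓝[Ioo (0:ℝ) 1] 1).NeBot := by
        apply mem_closure_iff_nhdsWithin_neBot.mp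
        rw [closure_Ioo (by norm_num : (0:ℝ) ≠ 1)]
        exact right_mem_Icc.mpr zero_le_one
      have : u' 1 ≤ 0 := le_of_tendsto hct'
        (eventually_nhdsWithin_of_forall (fun x hx => (hu'neg x hx).le))
      exact absurd h (not_lt.mpr this)
  have hu'neg' : ∀ r ∈ Ioc (0:ℝ) 1, u' r < 0 := by
    intro r hr
    rcases eq_or_lt_of_le hr.2 with h | h
    · rw [h]; exact hu'1
    · exact hu'neg r ⟨hr.1, h⟩
  refine ⟨hu'neg', ?_⟩
  intro r hr
  rcases eq_or_lt_of_le hr.1 with h | h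
  · -- r = 0 : u 0 > u (1/2) > 0 by antitone
    have hanti : StrictAntiOn u (Icc 0 1) := by
      apply strictAntiOn_of_deriv_neg (convex_Icc 0 1) huc
      intro x hx
      rw [interior_Icc] at hx
      have hd : HasDerivAt u (u' x) x :=
        (hud x ⟨hx.1.le, hx.2.le⟩).hasDerivAt (Icc_mem_nhds hx.1 hx.2)
      rw [hd.deriv]
      exact hu'neg x hx
    have h12 : (1/2 : ℝ) ∈ Ioo (0:ℝ) 1 := by norm_num
    have := hanti (left_mem_Icc.mpr zero_le_one) ⟨by norm_num, by norm_num⟩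
      (by norm_num : (0:ℝ) < 1/2)
    rw [← h]
    exact lt_trans (hpos _ h12) this
  · exact hpos r ⟨h, hr.2⟩


private lemma key (N : ℕ) (hN : 1 ≤ N) (b1 b2 : ℝ → ℝ)
    (hb : ∀ r ∈ Ioo (0:ℝ) 1, 0 < b1 r ∧ b1 r ≤ b2 r)
    (s : ℝ) (hs : s ∈ Ioo (0:ℝ) 1) (hbs : b1 s < b2 s)
    (u1 u1' u2 u2' : ℝ → ℝ)
    (hu1'c : ContinuousOn u1' (Icc 0 1))
    (hu1d : ∀ r ∈ Icc (0:ℝ) 1, HasDerivWithinAt u1 (u1' r) (Icc 0 1) r)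
    (hu1eq : ∀ r ∈ Ioo (0:ℝ) 1,
      HasDerivAt (fun t => (-u1' t) ^ N) (b1 r * (u1 r) ^ N) r)
    (hu1b0 : u1' 0 = 0) (hu1b1 : u1 1 = 0)
    (hu2'c : ContinuousOn u2' (Icc 0 1))
    (hu2d : ∀ r ∈ Icc (0:ℝ) 1, HasDerivWithinAt u2 (u2' r) (Icc 0 1) r)
    (hu2eq : ∀ r ∈ Ioo (0:ℝ) 1,
      HasDerivAt (fun t => (-u2' t) ^ N) (b2 r * (u2 r) ^ N) r)
    (hu2b0 : u2' 0 = 0) (hu2b1 : u2 1 = 0)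
    (hu1pos : ∀ r ∈ Ioo (0:ℝ) 1, 0 < u1 r)
    (hu2pos : ∀ r ∈ Ioo (0:ℝ) 1, 0 < u2 r) : False := by
  obtain ⟨M, rfl⟩ : ∃ M, N = M + 1 := ⟨N - 1, (Nat.succ_pred_eq_of_pos hN).symm⟩
  set N := M + 1 with hNdef
  obtain ⟨hu1'neg, hu1pos'⟩ := basic N hN b1 u1 u1' (fun r hr => (hb r hr).1)
    hu1'c hu1d hu1eq hu1b0 hu1b1 hu1pos
  obtain ⟨hu2'neg, hu2pos'⟩ := basic N hN b2 u2 u2' (fun r hr =>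
    lt_of_lt_of_le (hb r hr).1 (hb r hr).2) hu2'c hu2d hu2eq hu2b0 hu2b1 hu2pos
  have hu1c : ContinuousOn u1 (Icc 0 1) := fun r hr => (hu1d r hr).continuousWithinAt
  have hu2c : ContinuousOn u2 (Icc 0 1) := fun r hr => (hu2d r hr).continuousWithinAt
  set v1 : ℝ → ℝ := fun t => (-u1' t) ^ N with hv1def
  set v2 : ℝ → ℝ := fun t => (-u2' t) ^ N with hv2def
  have hv1c : ContinuousOn v1 (Icc 0 1) := (hu1'c.neg).pow N
  have hv2c : ContinuousOn v2 (Icc 0 1) := (hu2'c.neg).pow N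
  set B : ℝ → ℝ := fun t => u1 t ^ (N + 1) * v2 t * (u2 t ^ N)⁻¹ - u1 t * v1 t with hBdef
  -- derivative of B with lower bound
  have hBd : ∀ x ∈ Ioo (0:ℝ) 1, ∃ d, HasDerivAt B d x ∧
      (b2 x - b1 x) * u1 x ^ (N + 1) ≤ d := by
    intro x hx
    have hxIcc : x ∈ Icc (0:ℝ) 1 := ⟨hx.1.le, hx.2.le⟩
    have hu1x : HasDerivAt u1 (u1' x) x := (hu1d x hxIcc).hasDerivAt (Icc_mem_nhds hx.1 hx.2)
    have hu2x : HasDerivAt u2 (u2' x) x := (hu2d x hxIcc).hasDerivAt (Icc_mem_nhds hx.1 hx.2)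
    have hp2 : (0:ℝ) < u2 x := hu2pos x hx
    have hp1 : (0:ℝ) < u1 x := hu1pos x hx
    obtain ⟨A, hA⟩ : ∃ A, u1' x = -A := ⟨-u1' x, (neg_neg _).symm⟩
    obtain ⟨C, hC⟩ : ∃ C, u2' x = -C := ⟨-u2' x, (neg_neg _).symm⟩
    have hApos : 0 < A := by
      have := hu1'neg x ⟨hx.1, hx.2.le⟩; rw [hA] at this; linarith
    have hCpos : 0 < C := by
      have := hu2'neg x ⟨hx.1, hx.2.le⟩; rw [hC] at this; linarith
    have h1 : HasDerivAt (fun t => u1 t ^ (N + 1))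
        (↑(N + 1) * u1 x ^ (N + 1 - 1) * u1' x) x := hu1x.pow (N + 1)
    have h2 : HasDerivAt (fun t => u2 t ^ N) (↑N * u2 x ^ (N - 1) * u2' x) x := hu2x.pow N
    have h2inv : HasDerivAt (fun t => (u2 t ^ N)⁻¹)
        (-(↑N * u2 x ^ (N - 1) * u2' x) / (u2 x ^ N) ^ 2) x :=
      h2.inv (pow_ne_zero _ hp2.ne')
    have hv2x : HasDerivAt v2 (b2 x * u2 x ^ N) x := hu2eq x hx
    have hv1x : HasDerivAt v1 (b1 x * u1 x ^ N) x := hu1eq x hx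
    have hB : HasDerivAt B
        (((↑(N + 1) * u1 x ^ (N + 1 - 1) * u1' x) * v2 x
          + u1 x ^ (N + 1) * (b2 x * u2 x ^ N)) * (u2 x ^ N)⁻¹
         + (u1 x ^ (N + 1) * v2 x) * (-(↑N * u2 x ^ (N - 1) * u2' x) / (u2 x ^ N) ^ 2)
         - (u1' x * v1 x + u1 x * (b1 x * u1 x ^ N))) x :=
      ((h1.mul hv2x).mul h2inv).sub (hu1x.mul hv1x)
    refine ⟨_, hB, ?_⟩
    have hv1x' : v1 x = A ^ N := by rw [hv1def]; simp [hA]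
    have hv2x' : v2 x = C ^ N := by rw [hv2def]; simp [hC]
    rw [hv1x', hv2x', hA, hC]
    simp only [hNdef, Nat.add_sub_cancel]
    have hident : ((↑(M + 1 + 1) * u1 x ^ (M + 1) * (-A) * C ^ (M + 1)
          + u1 x ^ (M + 1 + 1) * (b2 x * u2 x ^ (M + 1))) * (u2 x ^ (M + 1))⁻¹
         + (u1 x ^ (M + 1 + 1) * C ^ (M + 1))
            * (-(↑(M + 1) * u2 x ^ M * (-C)) / (u2 x ^ (M + 1)) ^ 2)
         - ((-A) * A ^ (M + 1) + u1 x * (b1 x * u1 x ^ (M + 1))))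
        = (b2 x - b1 x) * u1 x ^ (M + 1 + 1)
          + (A ^ (M + 1 + 1) + ((M:ℝ) + 1) * (u1 x * C / u2 x) ^ (M + 1 + 1)
             - (((M:ℝ) + 1) + 1) * (A * (u1 x * C / u2 x) ^ (M + 1))) := by
      have := hp2.ne'
      simp only [div_pow, mul_pow]
      push_cast
      field_simp
      ring
    rw [hident]
    have hy : (0:ℝ) ≤ u1 x * C / u2 x := by positivity
    have hamgm := amgm (M + 1) hApos.le hy
    push_cast at hamgm ⊢
    linarith
  -- B is monotone on [0,1)
  have hne : ∀ t ∈ Ico (0:ℝ) 1, u2 t ^ N ≠ 0 := fun t ht => pow_ne_zero _ (hu2pos' t ht).ne'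
  have hsub : Ico (0:ℝ) 1 ⊆ Icc 0 1 := Ico_subset_Icc_self
  have hBc : ContinuousOn B (Ico 0 1) :=
    ((((hu1c.mono hsub).pow _).mul (hv2c.mono hsub)).mul
      (((hu2c.mono hsub).pow N).inv₀ hne)).sub ((hu1c.mono hsub).mul (hv1c.mono hsub))
  have hBmono : MonotoneOn B (Ico 0 1) := by
    apply monotoneOn_of_deriv_nonneg (convex_Ico 0 1) hBc
    · intro x hx
      rw [interior_Ico] at hx
      obtain ⟨d, hd, _⟩ := hBd x hx
      exact hd.differentiableAt.differentiableWithinAt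
    · intro x hx
      rw [interior_Ico] at hx
      obtain ⟨d, hd, hge⟩ := hBd x hx
      rw [hd.deriv]
      refine le_trans ?_ hge
      exact mul_nonneg (sub_nonneg.mpr (hb x hx).2) (pow_nonneg (hu1pos x hx).le _)
  have hB0 : B 0 = 0 := by
    simp [hBdef, hv1def, hv2def, hu1b0, hu2b0, zero_pow (Nat.one_le_iff_ne_zero.mp hN)]
  -- find r₀ with B r₀ > 0
  obtain ⟨d, hd, hge⟩ := hBd s hs
  have hd0 : 0 < d :=
    lt_of_lt_of_le (mul_pos (sub_pos.mpr hbs) (pow_pos (hu1pos s hs) _)) hge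
  rw [hasDerivAt_iff_tendsto_slope] at hd
  have hle : 𝓝[>] s ≤ 𝓝[≠] s := nhdsWithin_mono s (fun x hx => ne_of_gt hx)
  have hslope : ∀ᶠ r in 𝓝[>] s, 0 < slope B s r :=
    (hd.eventually (eventually_gt_nhds hd0)).filter_mono hle
  have hIoo : Ioo s 1 ∈ 𝓝[>] s := Ioo_mem_nhdsGT_of_mem ⟨le_refl s, hs.2⟩
  obtain ⟨r₀, hr₀slope, hr₀mem⟩ :=
    (hslope.and (eventually_of_mem hIoo (fun x hx => hx))).exists
  have hBr₀ : 0 < B r₀ := by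
    rw [slope_def_field] at hr₀slope
    have h1 : 0 < r₀ - s := sub_pos.mpr hr₀mem.1
    have h2 := mul_pos hr₀slope h1
    rw [div_mul_cancel₀ _ h1.ne'] at h2
    have hBs : 0 ≤ B s := by
      rw [← hB0]
      exact hBmono ⟨le_refl 0, zero_lt_one⟩ ⟨hs.1.le, hs.2⟩ hs.1.le
    linarith
  set c := B r₀ with hcdef
  have hr₀Ico : r₀ ∈ Ico (0:ℝ) 1 := ⟨(lt_trans hs.1 hr₀mem.1).le, hr₀mem.2⟩
  -- bounds near r = 1
  obtain ⟨L, hL⟩ := isCompact_Icc.exists_bound_of_continuousOn hu1'c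
  have hL0 : 0 ≤ L := le_trans (norm_nonneg _) (hL 0 (left_mem_Icc.mpr zero_le_one))
  have hu1lin : ∀ r ∈ Icc (0:ℝ) 1, u1 r ≤ L * (1 - r) := by
    intro r hr
    have hmvt := Convex.norm_image_sub_le_of_norm_hasDerivWithin_le hu1d hL (convex_Icc 0 1)
      (right_mem_Icc.mpr zero_le_one) hr
    rw [hu1b1, Real.norm_eq_abs, Real.norm_eq_abs, sub_zero, abs_sub_comm] at hmvt
    have h1 : |1 - r| = 1 - r := abs_of_nonneg (by linarith [hr.2])
    calc u1 r ≤ |u1 r| := le_abs_self _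
    _ ≤ L * |1 - r| := hmvt
    _ = L * (1 - r) := by rw [h1]
  set m := -u2' 1 / 2 with hmdef
  have hm : 0 < m := by
    have := hu2'neg 1 ⟨zero_lt_one, le_refl 1⟩
    rw [hmdef]; linarith
  have hct : Tendsto u2' (𝓝[Icc 0 1] 1) (𝓝 (u2' 1)) :=
    hu2'c 1 (right_mem_Icc.mpr zero_le_one)
  have hev : ∀ᶠ x in 𝓝[Icc (0:ℝ) 1] 1, u2' x < -m := by
    apply hct.eventually (eventually_lt_nhds ?_)
    have := hu2'neg 1 ⟨zero_lt_one, le_refl 1⟩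
    rw [hmdef]; linarith
  obtain ⟨ε, hε, hball⟩ := Metric.mem_nhdsWithin_iff.mp hev
  set r₁ := max r₀ (1 - ε / 2) with hr₁def
  have hr₁lt : r₁ < 1 := max_lt hr₀mem.2 (by linarith)
  have hr₁0 : 0 < r₁ := lt_of_lt_of_le (lt_trans hs.1 hr₀mem.1) (le_max_left _ _)
  have hu2'small : ∀ x ∈ Icc r₁ 1, u2' x < -m := by
    intro x hx
    apply hball
    constructor
    · rw [Metric.mem_ball, Real.dist_eq]
      have h1 : 1 - ε / 2 ≤ r₁ := le_max_right _ _
      have h2 : 1 - ε / 2 ≤ x := le_trans h1 hx.1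
      rw [abs_sub_comm, abs_of_nonneg (by linarith [hx.2])]
      linarith
    · exact ⟨le_trans hr₁0.le hx.1, hx.2⟩
  have hu2lin : ∀ r ∈ Icc r₁ 1, m * (1 - r) ≤ u2 r := by
    intro r hr
    have hanti : AntitoneOn (fun t => u2 t + m * t) (Icc r₁ 1) := by
      apply antitoneOn_of_deriv_nonpos (convex_Icc r₁ 1)
      · exact (hu2c.mono (Icc_subset_Icc hr₁0.le le_rfl)).add
          ((continuous_const.mul continuous_id).continuousOn)
      · intro x hx
        rw [interior_Icc] at hx
        have hx' : x ∈ Ioo (0:ℝ) 1 := ⟨lt_trans hr₁0 hx.1, lt_of_lt_of_le hx.2 le_rfl⟩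
        have hdd : HasDerivAt (fun t => u2 t + m * t) (u2' x + m) x := by
          have := ((hu2d x ⟨hx'.1.le, hx'.2.le⟩).hasDerivAt
            (Icc_mem_nhds hx'.1 hx'.2)).add ((hasDerivAt_id x).const_mul m)
          exact this.congr_deriv (by ring)
        exact hdd.differentiableAt.differentiableWithinAt
      · intro x hx
        rw [interior_Icc] at hx
        have hx' : x ∈ Ioo (0:ℝ) 1 := ⟨lt_trans hr₁0 hx.1, hx.2⟩
        have hdd : HasDerivAt (fun t => u2 t + m * t) (u2' x + m) x := by
          have := ((hu2d x ⟨hx'.1.le, hx'.2.le⟩).hasDerivAt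
            (Icc_mem_nhds hx'.1 hx'.2)).add ((hasDerivAt_id x).const_mul m)
          exact this.congr_deriv (by ring)
        rw [hdd.deriv]
        have := hu2'small x ⟨hx.1.le, hx.2.le⟩
        linarith
    have := hanti hr (right_mem_Icc.mpr (le_trans hr.1 hr.2)) hr.2
    simp only [hu2b1] at this
    linarith
  obtain ⟨Mv, hMv⟩ := isCompact_Icc.exists_bound_of_continuousOn hv2c
  have hMv0 : 0 ≤ Mv := le_trans (norm_nonneg _) (hMv 0 (left_mem_Icc.mpr zero_le_one))
  set K := L ^ (N + 1) * Mv / m ^ N + 1 with hKdef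
  have hq0 : 0 ≤ L ^ (N + 1) * Mv / m ^ N :=
    div_nonneg (mul_nonneg (pow_nonneg hL0 _) hMv0) (pow_nonneg hm.le _)
  have hK : 0 < K := by rw [hKdef]; linarith
  set r₂ := max r₁ (1 - c / K) with hr₂def
  have hcK : 0 < c / K := div_pos hBr₀ hK
  have hr₂lt : r₂ < 1 := max_lt hr₁lt (by linarith)
  have hr₂Ioo : r₂ ∈ Ioo (0:ℝ) 1 := ⟨lt_of_lt_of_le hr₁0 (le_max_left _ _), hr₂lt⟩
  have hr₂Ico : r₂ ∈ Ico (0:ℝ) 1 := ⟨hr₂Ioo.1.le, hr₂lt⟩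
  have hr₂r₁ : r₁ ≤ r₂ := le_max_left _ _
  have hr₂gap : 1 - r₂ ≤ c / K := by
    have h := le_max_right r₁ (1 - c / K)
    rw [← hr₂def] at h
    linarith
  have hone : (0:ℝ) < 1 - r₂ := by linarith
  -- chain of inequalities
  have hmono2 : c ≤ B r₂ := hBmono hr₀Ico hr₂Ico (le_trans (le_max_left _ _) hr₂r₁)
  have hv1r₂ : 0 ≤ v1 r₂ := by
    rw [hv1def]
    have := hu1'neg r₂ ⟨hr₂Ioo.1, hr₂Ioo.2.le⟩
    exact pow_nonneg (by linarith) N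
  have hv2r₂nn : 0 ≤ v2 r₂ := by
    rw [hv2def]
    have := hu2'neg r₂ ⟨hr₂Ioo.1, hr₂Ioo.2.le⟩
    exact pow_nonneg (by linarith) N
  have hu1r₂ : 0 < u1 r₂ := hu1pos r₂ hr₂Ioo
  have h1 : u1 r₂ ^ (N + 1) ≤ (L * (1 - r₂)) ^ (N + 1) :=
    pow_le_pow_left₀ hu1r₂.le (hu1lin r₂ ⟨hr₂Ioo.1.le, hr₂Ioo.2.le⟩) _
  have h2 : v2 r₂ ≤ Mv :=
    le_trans (le_abs_self _) (hMv r₂ ⟨hr₂Ioo.1.le, hr₂Ioo.2.le⟩)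
  have h3 : (m * (1 - r₂)) ^ N ≤ u2 r₂ ^ N :=
    pow_le_pow_left₀ (mul_nonneg hm.le hone.le) (hu2lin r₂ ⟨hr₂r₁, hr₂lt.le⟩) _
  have hpos3 : (0:ℝ) < (m * (1 - r₂)) ^ N := pow_pos (mul_pos hm hone) _
  have hchain : B r₂ ≤ (L ^ (N + 1) * Mv / m ^ N) * (1 - r₂) := by
    calc B r₂ ≤ u1 r₂ ^ (N + 1) * v2 r₂ * (u2 r₂ ^ N)⁻¹ := by
          have hnn : 0 ≤ u1 r₂ * v1 r₂ := mul_nonneg hu1r₂.le hv1r₂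
          simp only [hBdef]
          linarith
    _ = u1 r₂ ^ (N + 1) * v2 r₂ / u2 r₂ ^ N := by rw [div_eq_mul_inv]
    _ ≤ (L * (1 - r₂)) ^ (N + 1) * Mv / (m * (1 - r₂)) ^ N := by
          apply div_le_div₀ (by positivity)
            (mul_le_mul h1 h2 hv2r₂nn (by positivity)) hpos3 h3
    _ = (L ^ (N + 1) * Mv / m ^ N) * (1 - r₂) := by
          rw [mul_pow, mul_pow, pow_succ]
          field_simp
          ring
  have h5 : (L ^ (N + 1) * Mv / m ^ N) * (1 - r₂) ≤ (L ^ (N + 1) * Mv / m ^ N) * (c / K) :=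
    mul_le_mul_of_nonneg_left hr₂gap hq0
  have h6 : (L ^ (N + 1) * Mv / m ^ N) * (c / K) < K * (c / K) :=
    mul_lt_mul_of_pos_right (by rw [hKdef]; linarith) hcK
  have h7 : K * (c / K) = c := by
    rw [mul_comm, div_mul_cancel₀ _ hK.ne']
  exact absurd (lt_of_le_of_lt (hmono2.trans (hchain.trans h5)) (by rw [h7] at h6; exact h6)) (lt_irrefl c)

theorem stmt10 (N : ℕ) (hN : 1 ≤ N) (b1 b2 : ℝ → ℝ)
    (hb1c : ContinuousOn b1 (Icc 0 1)) (hb2c : ContinuousOn b2 (Icc 0 1))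
    (hb : ∀ r ∈ Ioo (0:ℝ) 1, 0 < b1 r ∧ b1 r ≤ b2 r)
    (hstrict : 0 < volume {r : ℝ | r ∈ Ioo (0:ℝ) 1 ∧ b1 r < b2 r})
    (u1 u1' u2 u2' : ℝ → ℝ)
    (hu1'c : ContinuousOn u1' (Icc 0 1))
    (hu1d : ∀ r ∈ Icc (0:ℝ) 1, HasDerivWithinAt u1 (u1' r) (Icc 0 1) r)
    (hu1eq : ∀ r ∈ Ioo (0:ℝ) 1,
      HasDerivAt (fun t => (-u1' t) ^ N) (b1 r * (u1 r) ^ N) r)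
    (hu1b0 : u1' 0 = 0) (hu1b1 : u1 1 = 0)
    (hu2'c : ContinuousOn u2' (Icc 0 1))
    (hu2d : ∀ r ∈ Icc (0:ℝ) 1, HasDerivWithinAt u2 (u2' r) (Icc 0 1) r)
    (hu2eq : ∀ r ∈ Ioo (0:ℝ) 1,
      HasDerivAt (fun t => (-u2' t) ^ N) (b2 r * (u2 r) ^ N) r)
    (hu2b0 : u2' 0 = 0) (hu2b1 : u2 1 = 0)
    (hu1ne : ∀ r ∈ Ioo (0:ℝ) 1, u1 r ≠ 0) :
    ∃ τ ∈ Ioo (0:ℝ) 1, u2 τ = 0 := by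
  by_contra hcon
  push_neg at hcon
  obtain ⟨s, hsIoo, hbs⟩ : ∃ s, s ∈ Ioo (0:ℝ) 1 ∧ b1 s < b2 s := by
    obtain ⟨s, hs⟩ := nonempty_of_measure_ne_zero hstrict.ne'
    exact ⟨s, hs.1, hs.2⟩
  have hu1cI : ContinuousOn u1 (Icc 0 1) := fun r hr => (hu1d r hr).continuousWithinAt
  have hu2cI : ContinuousOn u2 (Icc 0 1) := fun r hr => (hu2d r hr).continuousWithinAt
  have hflip : ∀ (b u u' : ℝ → ℝ),
      (∀ r ∈ Ioo (0:ℝ) 1, HasDerivAt (fun t => (-u' t) ^ N) (b r * (u r) ^ N) r) →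
      ∀ r ∈ Ioo (0:ℝ) 1, HasDerivAt (fun t => (- -u' t) ^ N) (b r * (-u r) ^ N) r := by
    intro b u u' heq r hr
    have h2 := (heq r hr).const_mul ((-1:ℝ) ^ N)
    have hfun : (fun t : ℝ => ((-1:ℝ)) ^ N * (-u' t) ^ N) = (fun t => (- -u' t) ^ N) :=
      funext fun t => by rw [← mul_pow]; norm_num
    have hval : ((-1:ℝ)) ^ N * (b r * u r ^ N) = b r * (-u r) ^ N := by
      rw [neg_pow]; ring
    rw [hfun, hval] at h2
    exact h2
  rcases sign_const (hu1cI.mono Ioo_subset_Icc_self) hu1ne with h1p | h1n <;>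
    rcases sign_const (hu2cI.mono Ioo_subset_Icc_self) hcon with h2p | h2n
  · exact key N hN b1 b2 hb s hsIoo hbs u1 u1' u2 u2' hu1'c hu1d hu1eq hu1b0 hu1b1
      hu2'c hu2d hu2eq hu2b0 hu2b1 h1p h2p
  · exact key N hN b1 b2 hb s hsIoo hbs u1 u1' (fun t => -u2 t) (fun t => -u2' t)
      hu1'c hu1d hu1eq hu1b0 hu1b1
      hu2'c.neg (fun r hr => (hu2d r hr).neg) (hflip b2 u2 u2' hu2eq)
      (by simp [hu2b0]) (by simp [hu2b1]) h1p
      (fun r hr => neg_pos.mpr (h2n r hr))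
  · exact key N hN b1 b2 hb s hsIoo hbs (fun t => -u1 t) (fun t => -u1' t) u2 u2'
      hu1'c.neg (fun r hr => (hu1d r hr).neg) (hflip b1 u1 u1' hu1eq)
      (by simp [hu1b0]) (by simp [hu1b1])
      hu2'c hu2d hu2eq hu2b0 hu2b1
      (fun r hr => neg_pos.mpr (h1n r hr)) h2p
  · exact key N hN b1 b2 hb s hsIoo hbs (fun t => -u1 t) (fun t => -u1' t)
      (fun t => -u2 t) (fun t => -u2' t)
      hu1'c.neg (fun r hr => (hu1d r hr).neg) (hflip b1 u1 u1' hu1eq)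
      (by simp [hu1b0]) (by simp [hu1b1])
      hu2'c.neg (fun r hr => (hu2d r hr).neg) (hflip b2 u2 u2' hu2eq)
      (by simp [hu2b0]) (by simp [hu2b1])
      (fun r hr => neg_pos.mpr (h1n r hr)) (fun r hr => neg_pos.mpr (h2n r hr))
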